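/- If φ ∈ H and a > 0 satisfy ‖φ‖ ≤ a·‖Tφ‖, then for every k of the form k = 2^l, l = 0, 1, 2, ..., one has ‖φ‖ ≤ a^k·‖T^k φ‖. -/

import Mathlib

lemma key_sq {H : Type*} [NormedAddCommGroup H] [InnerProductSpace ℂ H] [CompleteSpace H]
    (S : H →L[ℂ] H) (hS : IsSelfAdjoint S) (φ : H) :
    ‖S φ‖ ^ 2 ≤ ‖S (S φ)‖ * ‖φ‖ := by
  have h1 : (‖S φ‖ : ℝ) ^ 2 = (inner ℂ (S (S φ)) φ : ℂ).re := by
    rw [← @inner_self_eq_norm_sq ℂ]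
    exact congrArg Complex.re (hS.isSymmetric (S φ) φ).symm
  rw [h1]
  calc (inner ℂ (S (S φ)) φ : ℂ).re ≤ ‖(inner ℂ (S (S φ)) φ : ℂ)‖ :=
        Complex.re_le_norm _
    _ ≤ ‖S (S φ)‖ * ‖φ‖ := norm_inner_le_norm _ _

/-- Let `H` be a complex Hilbert space and `T : H → H` a bounded
self-adjoint operator which is non-negative, i.e. `⟨Tx, x⟩ ≥ 0` for all `x`.
If `φ ∈ H` and `a > 0` satisfy `‖φ‖ ≤ a·‖Tφ‖`, then for every `k` of the form
`k = 2^l`, `l = 0, 1, 2, ...`, one has `‖φ‖ ≤ a^k·‖T^k φ‖`. -/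
theorem stmt_4 {H : Type*} [NormedAddCommGroup H] [InnerProductSpace ℂ H]
    [CompleteSpace H] (T : H →L[ℂ] H) (hT : IsSelfAdjoint T)
    (hpos : ∀ x : H, 0 ≤ (inner ℂ (T x) x : ℂ).re)
    (φ : H) (a : ℝ) (ha : 0 < a)
    (h : ‖φ‖ ≤ a * ‖T φ‖) :
    ∀ l : ℕ, ‖φ‖ ≤ a ^ (2 ^ l) * ‖(T ^ (2 ^ l)) φ‖ := by
  intro l
  induction l with
  | zero => simpa using h
  | succ l ih =>
    by_cases hφ : φ = 0
    · simp [hφ]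
    have hφn : 0 < ‖φ‖ := norm_pos_iff.mpr hφ
    set S := T ^ (2 ^ l) with hSdef
    have hS : IsSelfAdjoint S := hT.pow _
    have hkey : ‖S φ‖ ^ 2 ≤ ‖S (S φ)‖ * ‖φ‖ := key_sq S hS φ
    have hsq : ‖φ‖ ^ 2 ≤ (a ^ (2 ^ l)) ^ 2 * ‖S φ‖ ^ 2 := by
      rw [← mul_pow]
      exact pow_le_pow_left₀ (norm_nonneg _) ih 2
    have h2 : ‖φ‖ ^ 2 ≤ (a ^ (2 ^ l)) ^ 2 * (‖S (S φ)‖ * ‖φ‖) := by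
      refine hsq.trans ?_
      exact mul_le_mul_of_nonneg_left hkey (by positivity)
    have h3 : ‖φ‖ * ‖φ‖ ≤ ((a ^ (2 ^ l)) ^ 2 * ‖S (S φ)‖) * ‖φ‖ := by
      nlinarith [h2]
    have h4 : ‖φ‖ ≤ (a ^ (2 ^ l)) ^ 2 * ‖S (S φ)‖ :=
      le_of_mul_le_mul_right h3 hφn
    have hSS : S (S φ) = (T ^ (2 ^ (l + 1))) φ := by
      rw [pow_succ, pow_mul]
      rfl
    rw [← hSS]
    calc ‖φ‖ ≤ (a ^ (2 ^ l)) ^ 2 * ‖S (S φ)‖ := h4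
      _ = a ^ (2 ^ (l + 1)) * ‖S (S φ)‖ := by
          rw [← pow_mul, ← pow_succ]
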